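/- Let H be a Hilbert space, W a finite-dimensional subspace, W_ℓ another subspace of the same dimension, E_ℓ the orthogonal projection onto W_ℓ, and F_ℓ = E_ℓ|_W : W → W_ℓ. If δ := sup_{u∈W, ‖u‖=1} inf_{v∈W_ℓ} ‖u − v‖ ≤ 1/2, then F_ℓ is a bijection from W onto W_ℓ, ‖F_ℓ^{-1}‖ ≤ 2, and sup_{x∈W_ℓ, ‖x‖=1} ‖F_ℓ^{-1}x − x‖ ≤ C δ for an absolute constant C. -/

import Mathlib

open scoped RealInnerProductSpace

/-- Proposition 4.1: if the gap δ(W,W_ℓ) ≤ 1/2 then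
F_ℓ = E_ℓ|_W : W → W_ℓ is a bijection, ‖F_ℓ⁻¹‖ ≤ 2, and
‖F_ℓ⁻¹ x − x‖ ≤ C δ for unit vectors x ∈ W_ℓ. -/
theorem stmt_7 {H : Type*} [NormedAddCommGroup H] [InnerProductSpace ℝ H]
    [CompleteSpace H] (W Wl : Submodule ℝ H)
    [FiniteDimensional ℝ W] [FiniteDimensional ℝ Wl]
    (hdim : Module.finrank ℝ W = Module.finrank ℝ Wl)
    (δ : ℝ)
    (hδ : ∀ u ∈ W, ‖u‖ = 1 → Metric.infDist u (Wl : Set H) ≤ δ)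
    (hδsmall : δ ≤ 1 / 2)
    (F : W →L[ℝ] Wl)
    (hF : ∀ y : W, (F y : H) = (Submodule.orthogonalProjectionOnto Wl (y : H) : H)) :
    Function.Bijective F ∧
    (∀ y : W, ‖y‖ ≤ 2 * ‖F y‖) ∧
    ∃ C : ℝ, 0 < C ∧
      ∀ x : Wl, ‖(x : H)‖ = 1 → ∀ y : W, F y = x → ‖(y : H) - (x : H)‖ ≤ C * δ := by
  -- infDist equals norm of difference to orthogonal projection
  have hmin : ∀ u : H, ‖u - (Submodule.orthogonalProjectionOnto Wl u : H)‖ = Metric.infDist u (Wl : Set H) := by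
    intro u
    rw [Metric.infDist_eq_iInf, ← Submodule.starProjection_apply, Submodule.starProjection_minimal]
    simp_rw [dist_eq_norm]
    rfl
  -- key estimate
  have key : ∀ y : W, ‖(y : H) - (F y : H)‖ ≤ δ * ‖(y : H)‖ := by
    intro y
    rcases eq_or_ne (y : H) 0 with h0 | h0
    · simp [h0, hF, show y = 0 from Subtype.ext h0]
    · have hn : (0 : ℝ) < ‖(y : H)‖ := norm_pos_iff.mpr h0
      set u : H := ‖(y : H)‖⁻¹ • (y : H) with hu
      have hu1 : ‖u‖ = 1 := by
        rw [hu, norm_smul, norm_inv, norm_norm, inv_mul_cancel₀ hn.ne']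
      have huW : u ∈ W := W.smul_mem _ y.2
      have h1 : Metric.infDist u (Wl : Set H) ≤ δ := hδ u huW hu1
      rw [← hmin] at h1
      have hproj : (Submodule.orthogonalProjectionOnto Wl u : H) = ‖(y : H)‖⁻¹ • (Submodule.orthogonalProjectionOnto Wl (y : H) : H) := by
        rw [hu, map_smul]; rfl
      have : ‖u - (Submodule.orthogonalProjectionOnto Wl u : H)‖
          = ‖(y : H)‖⁻¹ * ‖(y : H) - (Submodule.orthogonalProjectionOnto Wl (y : H) : H)‖ := by
        rw [hproj, hu, ← smul_sub, norm_smul, norm_inv, norm_norm]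
      rw [this] at h1
      rw [hF]
      calc ‖(y : H) - (Submodule.orthogonalProjectionOnto Wl (y : H) : H)‖
          = ‖(y : H)‖ * (‖(y : H)‖⁻¹ * ‖(y : H) - (Submodule.orthogonalProjectionOnto Wl (y : H) : H)‖) := by
            field_simp
        _ ≤ ‖(y : H)‖ * δ := by
            exact mul_le_mul_of_nonneg_left h1 hn.le
        _ = δ * ‖(y : H)‖ := mul_comm _ _
  -- norm lower bound
  have hlow : ∀ y : W, ‖y‖ ≤ 2 * ‖F y‖ := by
    intro y
    have h1 : ‖(y : H)‖ ≤ ‖(y : H) - (F y : H)‖ + ‖(F y : H)‖ := by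
      simpa using norm_add_le ((y : H) - (F y : H)) (F y : H)
    have h2 := key y
    have h3 : δ * ‖(y : H)‖ ≤ (1/2) * ‖(y : H)‖ :=
      mul_le_mul_of_nonneg_right hδsmall (norm_nonneg _)
    have : ‖(y : H)‖ ≤ 2 * ‖(F y : H)‖ := by nlinarith [norm_nonneg ((y : H))]
    simpa using this
  have hinj : Function.Injective F := by
    intro a b hab
    have : ‖a - b‖ ≤ 2 * ‖F (a - b)‖ := hlow (a - b)
    rw [map_sub, hab, sub_self, norm_zero] at this
    have : a - b = 0 := norm_le_zero_iff.mp (by linarith)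
    exact sub_eq_zero.mp this
  have hsurj : Function.Surjective F :=
    (LinearMap.injective_iff_surjective_of_finrank_eq_finrank hdim).mp hinj
  refine ⟨⟨hinj, hsurj⟩, hlow, 2, two_pos, ?_⟩
  intro x hx y hFy
  have h1 : ‖(y : H) - (x : H)‖ ≤ δ * ‖(y : H)‖ := by rw [← hFy]; exact key y
  have h2 : ‖(y : H)‖ ≤ 2 := by
    have := hlow y
    rw [hFy] at this
    simp only [Submodule.norm_coe] at this hx ⊢
    rw [hx] at this; linarith [this]
  have hy0 : (0:ℝ) < ‖(y : H)‖ := by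
    rcases eq_or_ne (y : H) 0 with h0 | h0
    · rw [h0] at h1; simp [hx] at h1; linarith
    · exact norm_pos_iff.mpr h0
  have hδ0 : 0 ≤ δ := by nlinarith [norm_nonneg ((y : H) - (x : H))]
  calc ‖(y : H) - (x : H)‖ ≤ δ * ‖(y : H)‖ := h1
    _ ≤ δ * 2 := by nlinarith
    _ = 2 * δ := mul_comm _ _
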